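/- Let $k$ be a finite field of characteristic 2, $a\in k^*$, $b\in k$, $P(x)=a^2x^5+b^2x+a$. Suppose $v\in k$ satisfies $v^5P(v)=1$ and $v=z+z'$ with $z,z'$ roots of $P$. Then $z$ and $z'$ are the roots of $T^2+vT+(av^3)^{-1}$; consequently $z,z'\in k$ if $(av^5)^{-1}\in\mathrm{AS}(k)$, and $z,z'$ lie in the quadratic extension $k_2\setminus k$ and are conjugate over $k$ otherwise. -/

import Mathlib

/-- `k` a finite field of characteristic 2, `k₂` its quadratic extension.  If
`v ∈ k` satisfies `v⁵P(v) = 1` and `v = z + z'` with `z, z'` roots of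
`P(x) = a²x⁵ + b²x + a`, then `z, z'` are the roots of `T² + vT + (av³)⁻¹`;
they lie in `k` if `(av⁵)⁻¹ ∈ AS(k)`, and otherwise they lie in `k₂ \ k` and
are conjugate over `k`. -/
theorem stmt_9 (k k₂ : Type*) [Field k] [Fintype k] [CharP k 2]
    [Field k₂] [Fintype k₂] [Algebra k k₂] (hdim : Module.finrank k k₂ = 2)
    (a b v : k) (ha : a ≠ 0)
    (hv : v ^ 5 * (a ^ 2 * v ^ 5 + b ^ 2 * v + a) = 1)
    (z z' : k₂)
    (hz : algebraMap k k₂ (a ^ 2) * z ^ 5 + algebraMap k k₂ (b ^ 2) * z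
            + algebraMap k k₂ a = 0)
    (hz' : algebraMap k k₂ (a ^ 2) * z' ^ 5 + algebraMap k k₂ (b ^ 2) * z'
            + algebraMap k k₂ a = 0)
    (hsum : z + z' = algebraMap k k₂ v) :
    (z ^ 2 + algebraMap k k₂ v * z + algebraMap k k₂ ((a * v ^ 3)⁻¹) = 0 ∧
     z' ^ 2 + algebraMap k k₂ v * z' + algebraMap k k₂ ((a * v ^ 3)⁻¹) = 0) ∧
    ((∃ t : k, (a * v ^ 5)⁻¹ = t + t ^ 2) →
      z ∈ Set.range (algebraMap k k₂) ∧ z' ∈ Set.range (algebraMap k k₂)) ∧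
    (¬ (∃ t : k, (a * v ^ 5)⁻¹ = t + t ^ 2) →
      z ∉ Set.range (algebraMap k k₂) ∧ z' ∉ Set.range (algebraMap k k₂) ∧
      ∃ σ : k₂ ≃ₐ[k] k₂, σ z = z') := by
  set f := algebraMap k k₂ with hf
  have finj : Function.Injective f := f.injective
  haveI : CharP k₂ 2 := charP_of_injective_algebraMap finj 2
  have h2 : (2 : k₂) = 0 := by exact_mod_cast CharP.cast_eq_zero k₂ 2
  have h2k : (2 : k) = 0 := by exact_mod_cast CharP.cast_eq_zero k 2
  have hv0 : v ≠ 0 := by rintro rfl; simp at hv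
  have hfa : f a ≠ 0 := fun h => ha (finj (by simpa using h))
  have hfv : f v ≠ 0 := fun h => hv0 (finj (by simpa using h))
  have hzz : z' = f v + z := by linear_combination hsum - z * h2
  simp only [map_pow] at hz hz'
  have hz2 := hz'; rw [hzz] at hz2
  have key : f a ^ 2 * f v ^ 4 * z ^ 2 + f a ^ 2 * f v ^ 5 * z + f a * f v = 0 := by
    linear_combination (z + f v) * hz + z * hz2 -
      (f a ^ 2 * z ^ 6 + 2 * f a ^ 2 * f v ^ 4 * z ^ 2 + 5 * f a ^ 2 * f v ^ 3 * z ^ 3 +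
        5 * f a ^ 2 * f v ^ 2 * z ^ 4 + 3 * f a ^ 2 * f v * z ^ 5 +
        f b ^ 2 * f v * z + f b ^ 2 * z ^ 2 + f a * z) * h2
  have key2 : f a * f v ^ 3 * z ^ 2 + f a * f v ^ 4 * z + 1 = 0 := by
    apply mul_left_cancel₀ (mul_ne_zero hfa hfv)
    rw [mul_zero]; linear_combination key
  have hc : f ((a * v ^ 3)⁻¹) = (f a * f v ^ 3)⁻¹ := by rw [map_inv₀, map_mul, map_pow]
  have eq1 : z ^ 2 + f v * z + f ((a * v ^ 3)⁻¹) = 0 := by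
    rw [hc]
    field_simp
    linear_combination key2
  have eq2 : z' ^ 2 + f v * z' + f ((a * v ^ 3)⁻¹) = 0 := by
    rw [hzz]; linear_combination eq1 + (f v ^ 2 + f v * z) * h2
  refine ⟨⟨eq1, eq2⟩, ?_, ?_⟩
  · rintro ⟨t, ht⟩
    have ht2 : (t + t ^ 2) * (a * v ^ 5) = 1 := by
      rw [← ht]; field_simp
    have ht2K := congrArg f ht2
    simp only [map_mul, map_add, map_pow, map_one] at ht2K
    have hfact : (z + f v * f t) * (z + f v * f t + f v) = 0 := by
      apply mul_left_cancel₀ (mul_ne_zero hfa (pow_ne_zero 3 hfv))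
      rw [mul_zero]
      linear_combination key2 + ht2K + (f a * f v ^ 4 * f t * z) * h2
    rcases mul_eq_zero.mp hfact with h | h
    · have hzval : z = f v * f t := by linear_combination h - f v * f t * h2
      exact ⟨⟨v * t, by rw [map_mul]; exact hzval.symm⟩,
             ⟨v + v * t, by rw [map_add, map_mul, hzz, hzval]⟩⟩
    · have hzval : z = f v * f t + f v := by
        linear_combination h - (f v * f t + f v) * h2
      refine ⟨⟨v * t + v, by rw [map_add, map_mul]; exact hzval.symm⟩,
             ⟨v * t, ?_⟩⟩
      rw [map_mul, hzz, hzval]; linear_combination - f v * h2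
  · intro hAS
    have hznr : z ∉ Set.range f := by
      rintro ⟨u, hu⟩
      apply hAS
      refine ⟨u / v, ?_⟩
      have hk : u ^ 2 + v * u + (a * v ^ 3)⁻¹ = 0 := by
        apply finj
        rw [map_add, map_add, map_pow, map_mul, map_zero, hu]
        exact eq1
      field_simp at hk ⊢
      linear_combination -hk + h2k
    have hz'nr : z' ∉ Set.range f := by
      rintro ⟨u, hu⟩
      exact hznr ⟨v + u, by rw [map_add, hu]; linear_combination hzz + f v * h2⟩
    refine ⟨hznr, hz'nr, ?_⟩
    set q : Polynomial k := Polynomial.X ^ 2 + Polynomial.C v * Polynomial.X +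
      Polynomial.C ((a * v ^ 3)⁻¹) with hq
    have hqz : Polynomial.aeval z q = 0 := by
      simp only [hq, map_add, map_pow, map_mul, Polynomial.aeval_X, Polynomial.aeval_C]
      exact eq1
    have hqz' : Polynomial.aeval z' q = 0 := by
      simp only [hq, map_add, map_pow, map_mul, Polynomial.aeval_X, Polynomial.aeval_C]
      exact eq2
    have hqmonic : q.Monic := by
      rw [hq, add_assoc]
      apply Polynomial.monic_X_pow_add
      apply lt_of_le_of_lt (Polynomial.degree_linear_le)
      norm_num
    have hqdeg : q.natDegree = 2 := by rw [hq]; compute_degree!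
    have hint : IsIntegral k z := ⟨q, hqmonic, hqz⟩
    have hdvd := minpoly.dvd k z hqz
    have hmdeg : 2 ≤ (minpoly k z).natDegree :=
      (minpoly.two_le_natDegree_iff hint).mpr (by simpa [RingHom.mem_range] using hznr)
    have hqm : q = minpoly k z :=
      Polynomial.eq_of_monic_of_dvd_of_natDegree_le (minpoly.monic hint) hqmonic hdvd
        (by rw [hqdeg]; exact hmdeg)
    exact minpoly.exists_algEquiv_of_root' ⟨q, hqmonic.ne_zero, hqz⟩ (hqm ▸ hqz')
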